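/- Let T be an O-operator on a Lie algebra g with respect to a representation (V;ρ) and let T + tŤ be a one-parameter infinitesimal deformation of T for all scalars t (i.e. T + tŤ is an O-operator for every t). Then Ť is an O-operator, and Ť is a 1-cocycle: for all u,v ∈ V, [Tu, Ťv] − [Tv, Ťu] − T(ρ(Ťu)v − ρ(Ťv)u) − Ť(ρ(Tu)v − ρ(Tv)u) = 0. -/

import Mathlib

attribute [local instance] LieRing.ofAssociativeRing

/-- If `T + tTd` is an O-operator for every scalar `t`, then `Td` is an
O-operator and a 1-cocycle. -/
theorem stmt7 {K : Type*} [Field K] [CharZero K]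
    {g : Type*} [LieRing g] [LieAlgebra K g]
    {V : Type*} [AddCommGroup V] [Module K V]
    (ρ : g →ₗ⁅K⁆ Module.End K V) (T Td : V →ₗ[K] g)
    (hT : ∀ u v : V, ⁅T u, T v⁆ = T (ρ (T u) v - ρ (T v) u))
    (hdef : ∀ t : K, ∀ u v : V,
      ⁅(T + t • Td) u, (T + t • Td) v⁆
        = (T + t • Td) (ρ ((T + t • Td) u) v - ρ ((T + t • Td) v) u)) :
    (∀ u v : V, ⁅Td u, Td v⁆ = Td (ρ (Td u) v - ρ (Td v) u)) ∧
    (∀ u v : V,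
      ⁅T u, Td v⁆ - ⁅T v, Td u⁆ - T (ρ (Td u) v - ρ (Td v) u)
        - Td (ρ (T u) v - ρ (T v) u) = 0) := by
  have key : ∀ u v : V,
      ⁅Td u, Td v⁆ - Td (ρ (Td u) v - ρ (Td v) u) = 0 ∧
      ⁅T u, Td v⁆ - ⁅T v, Td u⁆ - T (ρ (Td u) v - ρ (Td v) u)
        - Td (ρ (T u) v - ρ (T v) u) = 0 := by
    intro u v
    have h0 := hT u v
    have h1 := hdef 1 u v
    have h2 := hdef (-1) u v
    simp only [LinearMap.add_apply, LinearMap.smul_apply, one_smul, neg_smul, neg_one_smul,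
      map_add, map_sub, map_neg, lie_add, add_lie, lie_neg, neg_lie, lie_sub, sub_lie,
      LinearMap.neg_apply, LinearMap.sub_apply] at h0 h1 h2
    simp only [map_sub]
    constructor
    · linear_combination (norm := module) ((2:K)⁻¹) • h1 + ((2:K)⁻¹) • h2 - h0
    · rw [show ⁅T v, Td u⁆ = -⁅Td u, T v⁆ by rw [← lie_skew]]
      linear_combination (norm := module) ((2:K)⁻¹) • h1 - ((2:K)⁻¹) • h2
  exact ⟨fun u v => sub_eq_zero.mp (key u v).1, fun u v => (key u v).2⟩
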